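/- Let X be a Baire space. Then Alice has no winning strategy in the Banach–Mazur game BM(X): for every strategy σ for Alice there exists a play of the game following σ in which the intersection of the chosen open sets is nonempty. -/

import Mathlib

open Set

section BMAux

variable {X : Type*} [TopologicalSpace X]

/-- Families of legal (open, nonempty) Bob moves at position `l` whose Alice
responses are pairwise disjoint. -/
def BMfam (σ : List (Set X) → Set X) (l : List (Set X)) : Set (Set (Set X)) :=
  {T | (∀ U ∈ T, IsOpen U ∧ U.Nonempty ∧ (l ≠ [] → U ⊆ σ l)) ∧
    T.PairwiseDisjoint (fun U => σ (l ++ [U]))}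

lemma BMfam_exists_max (σ : List (Set X) → Set X) (l : List (Set X)) :
    ∃ m, Maximal (· ∈ BMfam σ l) m := by
  apply zorn_subset
  intro c hc hchain
  refine ⟨⋃₀ c, ⟨?_, ?_⟩, fun s hs => subset_sUnion_of_mem hs⟩
  · rintro U ⟨T, hT, hUT⟩
    exact (hc hT).1 U hUT
  · rintro U ⟨T, hT, hUT⟩ V ⟨T', hT', hVT'⟩ hUV
    rcases hchain.total hT hT' with h | h
    · exact (hc hT').2 (h hUT) hVT' hUV
    · exact (hc hT).2 hUT (h hVT') hUV

/-- A maximal such family. -/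
noncomputable def BMF (σ : List (Set X) → Set X) (l : List (Set X)) : Set (Set X) :=
  (BMfam_exists_max σ l).choose

lemma BMF_mem (σ : List (Set X) → Set X) (l : List (Set X)) : BMF σ l ∈ BMfam σ l :=
  (BMfam_exists_max σ l).choose_spec.1

lemma BMF_props {σ : List (Set X) → Set X} {l : List (Set X)} {U : Set X}
    (hU : U ∈ BMF σ l) : IsOpen U ∧ U.Nonempty ∧ (l ≠ [] → U ⊆ σ l) :=
  (BMF_mem σ l).1 U hU

lemma BMF_disj (σ : List (Set X) → Set X) (l : List (Set X)) :
    (BMF σ l).PairwiseDisjoint (fun U => σ (l ++ [U])) :=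
  (BMF_mem σ l).2

variable {σ : List (Set X) → Set X}
  (hσ : ∀ (l : List (Set X)) (U : Set X), l.getLast? = some U → IsOpen U → U.Nonempty →
      IsOpen (σ l) ∧ (σ l).Nonempty ∧ σ l ⊆ U)

include hσ in
/-- Maximality: every legal Bob move meets the Alice response to some member of `BMF`. -/
lemma BMF_hit (l : List (Set X)) (W : Set X) (hWo : IsOpen W) (hWne : W.Nonempty)
    (hWsub : l ≠ [] → W ⊆ σ l) : ∃ U ∈ BMF σ l, (W ∩ σ (l ++ [U])).Nonempty := by
  by_cases hW : W ∈ BMF σ l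
  · refine ⟨W, hW, ?_⟩
    obtain ⟨ho, hne, hsub⟩ := hσ (l ++ [W]) W List.getLast?_concat hWo hWne
    obtain ⟨y, hy⟩ := hne
    exact ⟨y, hsub hy, hy⟩
  · by_contra hcon
    push_neg at hcon
    have hsubW : σ (l ++ [W]) ⊆ W := (hσ (l ++ [W]) W List.getLast?_concat hWo hWne).2.2
    have hmem : insert W (BMF σ l) ∈ BMfam σ l := by
      constructor
      · rintro U (rfl | hU)
        · exact ⟨hWo, hWne, hWsub⟩
        · exact BMF_props hU
      · rintro U (rfl | hU) V (rfl | hV) hUV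
        · exact absurd rfl hUV
        · exact Set.disjoint_left.2 fun y hy hy' =>
            Set.eq_empty_iff_forall_notMem.1 (hcon V hV) y ⟨hsubW hy, hy'⟩
        · exact Set.disjoint_right.2 fun y hy hy' =>
            Set.eq_empty_iff_forall_notMem.1 (hcon U hU) y ⟨hsubW hy, hy'⟩
        · exact BMF_disj σ l hU hV hUV
    have hle := (BMfam_exists_max σ l).choose_spec.2 hmem (Set.subset_insert _ _)
    exact hW (hle (Set.mem_insert _ _))

/-- The tree of positions: level `n` consists of plays of `n+1` Bob moves. -/
noncomputable def BML (σ : List (Set X) → Set X) : ℕ → Set (List (Set X))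
  | 0 => (fun U => ([U] : List (Set X))) '' BMF σ []
  | (n + 1) => ⋃ l ∈ BML σ n, (fun U => l ++ [U]) '' BMF σ l

lemma BML_length : ∀ n, ∀ l ∈ BML σ n, l.length = n + 1 := by
  intro n
  induction n with
  | zero => rintro l ⟨U, hU, rfl⟩; rfl
  | succ n ih =>
    rintro l hl
    simp only [BML, Set.mem_iUnion] at hl
    obtain ⟨p, hp, U, hU, rfl⟩ := hl
    simp [ih p hp]

lemma BML_shape {n : ℕ} {l : List (Set X)} (hl : l ∈ BML σ n) :
    ∃ p U, l = p ++ [U] ∧ U ∈ BMF σ p ∧ p.length = n ∧ (∀ m, n = m + 1 → p ∈ BML σ m) := by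
  cases n with
  | zero =>
    obtain ⟨U, hU, rfl⟩ := hl
    exact ⟨[], U, rfl, hU, rfl, fun m hm => by omega⟩
  | succ n =>
    simp only [BML, Set.mem_iUnion] at hl
    obtain ⟨p, hp, U, hU, rfl⟩ := hl
    exact ⟨p, U, rfl, hU, BML_length n p hp, fun m hm => by
      obtain rfl : m = n := by omega
      exact hp⟩

include hσ in
lemma BML_sigma {n : ℕ} {l : List (Set X)} (hl : l ∈ BML σ n) :
    IsOpen (σ l) ∧ (σ l).Nonempty ∧ ∃ p U, l = p ++ [U] ∧ σ l ⊆ U ∧ U ∈ BMF σ p := by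
  obtain ⟨p, U, rfl, hU, -, -⟩ := BML_shape hl
  obtain ⟨ho, hne, -⟩ := BMF_props hU
  obtain ⟨h1, h2, h3⟩ := hσ (p ++ [U]) U List.getLast?_concat ho hne
  exact ⟨h1, h2, p, U, rfl, h3, hU⟩

include hσ in
lemma BML_disj : ∀ n, (BML σ n).PairwiseDisjoint (fun l => σ l) := by
  intro n
  induction n with
  | zero =>
    rintro l ⟨U, hU, rfl⟩ l' ⟨U', hU', rfl⟩ hne
    have : U ≠ U' := fun h => hne (by rw [h])
    simpa using BMF_disj σ [] hU hU' this
  | succ n ih =>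
    intro l hl l' hl' hne
    obtain ⟨p, U, rfl, hU, -, hp⟩ := BML_shape hl
    obtain ⟨p', U', rfl, hU', -, hp'⟩ := BML_shape hl'
    have hpn := hp n rfl
    have hp'n := hp' n rfl
    by_cases hpp : p = p'
    · subst hpp
      have : U ≠ U' := fun h => hne (by rw [h])
      exact BMF_disj σ p hU hU' this
    · have hplen : p ≠ [] := by
        have := BML_length n p hpn
        intro h; simp [h] at this
      have hp'len : p' ≠ [] := by
        have := BML_length n p' hp'n
        intro h; simp [h] at this
      have h1 : σ (p ++ [U]) ⊆ σ p := by
        obtain ⟨ho, hne', hsub⟩ := BMF_props hU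
        exact (hσ (p ++ [U]) U List.getLast?_concat ho hne').2.2.trans (hsub hplen)
      have h2 : σ (p' ++ [U']) ⊆ σ p' := by
        obtain ⟨ho, hne', hsub⟩ := BMF_props hU'
        exact (hσ (p' ++ [U']) U' List.getLast?_concat ho hne').2.2.trans (hsub hp'len)
      exact (ih hpn hp'n hpp).mono h1 h2

include hσ in
lemma BML_dense : ∀ n, Dense (⋃ l ∈ BML σ n, σ l) := by
  intro n
  induction n with
  | zero =>
    rw [dense_iff_inter_open]
    intro W hWo hWne
    obtain ⟨U, hU, y, hyW, hyσ⟩ := BMF_hit hσ [] W hWo hWne (fun h => absurd rfl h)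
    refine ⟨y, hyW, ?_⟩
    simp only [Set.mem_iUnion]
    exact ⟨[U], ⟨U, hU, rfl⟩, by simpa using hyσ⟩
  | succ n ih =>
    rw [dense_iff_inter_open]
    intro W hWo hWne
    obtain ⟨x, hxW, hxD⟩ := ih.inter_open_nonempty W hWo hWne
    simp only [Set.mem_iUnion] at hxD
    obtain ⟨p, hp, hxp⟩ := hxD
    have hplen : p ≠ [] := by
      have := BML_length n p hp
      intro h; simp [h] at this
    have hσp := BML_sigma hσ hp
    obtain ⟨U, hU, y, hyW', hyσ⟩ := BMF_hit hσ p (W ∩ σ p) (hWo.inter hσp.1)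
      ⟨x, hxW, hxp⟩ (fun _ => Set.inter_subset_right)
    refine ⟨y, hyW'.1, ?_⟩
    simp only [Set.mem_iUnion]
    refine ⟨p ++ [U], ?_, hyσ⟩
    simp only [BML, Set.mem_iUnion]
    exact ⟨p, hp, U, hU, rfl⟩

end BMAux

/-- If `X` is a (nonempty) Baire space, Alice has no winning strategy in the
Banach–Mazur game: for every strategy `σ` of Alice there is a play following `σ`
whose intersection is nonempty. -/
theorem stmt_10 {X : Type*} [TopologicalSpace X] [BaireSpace X] [Nonempty X]
    (σ : List (Set X) → Set X)
    (hσ : ∀ (l : List (Set X)) (U : Set X), l.getLast? = some U → IsOpen U → U.Nonempty →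
      IsOpen (σ l) ∧ (σ l).Nonempty ∧ σ l ⊆ U) :
    ∃ U : ℕ → Set X, IsOpen (U 0) ∧ (U 0).Nonempty ∧
      (∀ n, IsOpen (U (n + 1)) ∧ (U (n + 1)).Nonempty ∧
        U (n + 1) ⊆ σ (List.ofFn fun i : Fin (n + 1) => U i.1)) ∧
      (⋂ n, σ (List.ofFn fun i : Fin (n + 1) => U i.1)).Nonempty := by
  have hDo : ∀ n, IsOpen (⋃ l ∈ BML σ n, σ l) :=
    fun n => isOpen_iUnion fun l => isOpen_iUnion fun hl => (BML_sigma hσ hl).1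
  have hdense := dense_iInter_of_isOpen hDo (BML_dense hσ)
  obtain ⟨x, hx⟩ := hdense.nonempty
  simp only [Set.mem_iInter, Set.mem_iUnion] at hx
  choose c hc1 hc2 using hx
  -- uniqueness at each level
  have huniq : ∀ n (l : List (Set X)), l ∈ BML σ n → x ∈ σ l → l = c n := by
    intro n l hl hxl
    exact (BML_disj hσ n).elim_set hl (hc1 n) x hxl (hc2 n)
  -- the play extends step by step
  have hstep : ∀ n, ∃ U ∈ BMF σ (c n), c (n + 1) = c n ++ [U] := by
    intro n
    obtain ⟨p, U, heq, hU, -, hp⟩ := BML_shape (hc1 (n + 1))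
    have hpn := hp n rfl
    have hplen : p ≠ [] := by
      have := BML_length n p hpn
      intro h; simp [h] at this
    obtain ⟨ho, hne, hsub⟩ := BMF_props hU
    have hxp : x ∈ σ p := by
      have h1 : σ (p ++ [U]) ⊆ U :=
        (hσ (p ++ [U]) U List.getLast?_concat ho hne).2.2
      have := hc2 (n + 1)
      rw [heq] at this
      exact hsub hplen (h1 this)
    obtain rfl := huniq n p hpn hxp
    exact ⟨U, hU, heq⟩
  choose V hV1 hV2 using hstep
  obtain ⟨U0, hU0, hc0⟩ : ∃ U ∈ BMF σ ([] : List (Set X)), c 0 = [U] := by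
    obtain ⟨U, hU, h⟩ := hc1 0
    exact ⟨U, hU, h.symm⟩
  set U : ℕ → Set X := fun n => Nat.rec U0 (fun k _ => V k) n with hUdef
  have hcn : ∀ n, c n = List.ofFn (fun i : Fin (n + 1) => U i.1) := by
    intro n
    induction n with
    | zero => simp; exact hc0
    | succ n ih =>
      rw [hV2 n, ih]
      conv_rhs => rw [List.ofFn_succ']
      simp [List.concat_eq_append, Fin.val_last]
      rfl
  refine ⟨U, ?_, ?_, ?_, ⟨x, ?_⟩⟩
  · exact (BMF_props hU0).1
  · exact (BMF_props hU0).2.1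
  · intro n
    obtain ⟨ho, hne, hsub⟩ := BMF_props (hV1 n)
    have hclen : c n ≠ [] := by
      have := BML_length n (c n) (hc1 n)
      intro h; simp [h] at this
    refine ⟨ho, hne, ?_⟩
    rw [← hcn n]
    exact hsub hclen
  · simp only [Set.mem_iInter]
    intro n
    rw [← hcn n]
    exact hc2 n
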